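/- Let N ≥ 1 and let (X_{k,u})_{1≤k≤N, u∈ℕ} be mutually independent, identically distributed random variables taking values in (0,∞), and set v(s) = E[X_{1,0}^{s−1}]. For each k and natural numbers τ ≤ t define 𝒮_k(τ,t) = Π_{u=τ}^{t−1} X_{k,u}, and define the network service process 𝒮_net(τ,t) = min over all chains τ = u₀ ≤ u₁ ≤ ⋯ ≤ u_{N−1} ≤ u_N = t of Π_{k=1}^{N} 𝒮_k(u_{k−1}, u_k). Then for every real s < 1 and all τ ≤ t, E[ 𝒮_net(τ,t)^{s−1} ] ≤ C(N−1+t−τ, t−τ) · v(s)^{t−τ}, where C(·,·) is the binomial coefficient and the expectations may be infinite. -/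

import Mathlib

open MeasureTheory ProbabilityTheory
open scoped ENNReal

/-- Telescoping sum of consecutive differences of a monotone `ℕ`-valued tuple. -/
lemma fin_sum_sub_telescope : ∀ (n : ℕ) (u : Fin (n + 1) → ℕ), Monotone u →
    ∑ k : Fin n, (u k.succ - u k.castSucc) = u (Fin.last n) - u 0 := by
  intro n
  induction n with
  | zero => intro u _; simp
  | succ n ih =>
    intro u hu
    rw [Fin.sum_univ_castSucc]
    have h := ih (fun k => u k.castSucc)
      (fun a b hab => hu (Fin.castSucc_le_castSucc_iff.mpr hab))
    simp only [Fin.succ_castSucc, Fin.castSucc_zero] at h ⊢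
    rw [h]
    have h1 : u 0 ≤ u ((Fin.last n).castSucc) := hu (Fin.zero_le _)
    have h2 : u ((Fin.last n).castSucc) ≤ u ((Fin.last n).succ) :=
      hu Fin.castSucc_lt_succ.le
    have h3 : (Fin.last n).succ = Fin.last (n + 1) := Fin.succ_last n
    rw [h3] at h2 ⊢
    omega

/-- The expectation of a product of independent nonnegative random variables over a finite
index set factors as the product of expectations. -/
lemma lintegral_finset_prod_of_iIndepFun {Ω ι : Type*} [MeasureSpace Ω]
    [IsProbabilityMeasure (ℙ : Measure Ω)]
    (f : ι → Ω → ℝ≥0∞) (hmeas : ∀ i, Measurable (f i))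
    (hindep : iIndepFun f ℙ) (s : Finset ι) :
    ∫⁻ ω, ∏ i ∈ s, f i ω ∂ℙ = ∏ i ∈ s, ∫⁻ ω, f i ω ∂ℙ := by
  classical
  induction s using Finset.cons_induction with
  | empty => simp
  | cons i s hi ih =>
    rw [Finset.prod_cons]
    have hpe : (∏ j ∈ s, f j) = fun ω => ∏ j ∈ s, f j ω :=
      funext fun ω => Finset.prod_apply ω s f
    have hind : IndepFun (f i) (fun ω => ∏ j ∈ s, f j ω) ℙ := by
      rw [← hpe]
      exact (hindep.indepFun_finsetProd_of_notMem hmeas hi).symm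
    have hpm : Measurable (fun ω => ∏ j ∈ s, f j ω) :=
      s.measurable_prod (fun j _ => hmeas j)
    have hmul := lintegral_mul_eq_lintegral_mul_lintegral_of_indepFun
      (hmeas i) hpm hind
    simp only [Pi.mul_apply, Finset.prod_apply] at hmul
    simp only [Finset.prod_cons]
    rw [hmul, ih]

/-- The network SNR service process of an `N`-hop path: the minimum over all monotone
chains `τ = u₀ ≤ u₁ ≤ ⋯ ≤ u_N = t` of the product `Π_{k} 𝒮_k(u_{k−1}, u_k)`, where
`𝒮_k(τ,t) = Π_{u=τ}^{t−1} X_{k,u}` (the N-fold (min,×)-convolution). -/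
noncomputable def Snet {Ω : Type*} (N : ℕ) (X : Fin N → ℕ → Ω → ℝ)
    (τ t : ℕ) (ω : Ω) : ℝ :=
  sInf { y : ℝ | ∃ u : Fin (N + 1) → ℕ, Monotone u ∧ u 0 = τ ∧ u (Fin.last N) = t ∧
    y = ∏ k : Fin N, ∏ v ∈ Finset.Ico (u k.castSucc) (u k.succ), X k v ω }

/-- Mellin-transform bound for the `N`-fold (min,×)-convolution of i.i.d. per-hop SNR
service processes: for `s < 1`,
`E[𝒮_net(τ,t)^{s−1}] ≤ C(N−1+t−τ, t−τ) · v(s)^{t−τ}` with `v(s) = E[X_{1,0}^{s−1}]`. -/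
theorem mellin_Snet_le_binomial_bound
    {Ω : Type*} [MeasureSpace Ω] [IsProbabilityMeasure (ℙ : Measure Ω)]
    (N : ℕ) (hN : 0 < N)
    (X : Fin N → ℕ → Ω → ℝ)
    (hmeas : ∀ k u, Measurable (X k u))
    (hpos : ∀ k u ω, 0 < X k u ω)
    (hindep : iIndepFun
      (fun p : Fin N × ℕ => X p.1 p.2) ℙ)
    (hident : ∀ k u k' u', IdentDistrib (X k u) (X k' u') ℙ ℙ)
    (τ t : ℕ) (hτt : τ ≤ t) (s : ℝ) (hs : s < 1) :
    ∫⁻ ω, ENNReal.ofReal (Snet N X τ t ω ^ (s - 1)) ∂ℙ ≤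
      (Nat.choose (N - 1 + (t - τ)) (t - τ) : ℝ≥0∞) *
        (∫⁻ ω, ENNReal.ofReal (X ⟨0, hN⟩ 0 ω ^ (s - 1)) ∂ℙ) ^ (t - τ) := by
  classical
  set d := t - τ with hd
  set v : ℝ≥0∞ := ∫⁻ ω, ENNReal.ofReal (X ⟨0, hN⟩ 0 ω ^ (s - 1)) ∂ℙ with hv
  set g : ℝ → ℝ≥0∞ := fun x => ENNReal.ofReal (x ^ (s - 1)) with hg
  have hgmeas : Measurable g := (measurable_id.pow measurable_const).ennreal_ofReal
  set P : (Fin (N + 1) → ℕ) → Ω → ℝ := fun u ω =>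
    ∏ k : Fin N, ∏ n ∈ Finset.Ico (u k.castSucc) (u k.succ), X k n ω with hP
  have hPmeas : ∀ u, Measurable (P u) := fun u =>
    Finset.measurable_prod _ fun k _ => Finset.measurable_prod _ fun n _ => hmeas k n
  -- the finite set of chains
  set S : Finset (Fin (N + 1) → ℕ) :=
    (Fintype.piFinset fun _ => Finset.Icc τ t).filter
      (fun u => Monotone u ∧ u 0 = τ ∧ u (Fin.last N) = t) with hS
  have hmemS : ∀ u : Fin (N + 1) → ℕ, Monotone u → u 0 = τ → u (Fin.last N) = t → u ∈ S := by
    intro u h1 h2 h3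
    refine Finset.mem_filter.mpr ⟨Fintype.mem_piFinset.mpr fun j => ?_, h1, h2, h3⟩
    refine Finset.mem_Icc.mpr ⟨?_, ?_⟩
    · rw [← h2]; exact h1 (Fin.zero_le j)
    · rw [← h3]; exact h1 (Fin.le_last j)
  -- a chain exists
  have hlast_ne : (Fin.last N) ≠ (0 : Fin (N + 1)) := by
    simp only [ne_eq, Fin.ext_iff, Fin.val_last, Fin.val_zero]
    omega
  set u₀ : Fin (N + 1) → ℕ := fun k => if k = 0 then τ else t with hu₀
  have hu₀mono : Monotone u₀ := by
    intro a b hab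
    by_cases ha : a = 0
    · by_cases hb : b = 0 <;> simp [hu₀, ha, hb, hτt]
    · have hb : b ≠ 0 := by
        intro hb0
        exact ha (le_antisymm (hb0 ▸ hab) (Fin.zero_le a))
      simp [hu₀, ha, hb]
  have hu₀0 : u₀ 0 = τ := by simp [hu₀]
  have hu₀last : u₀ (Fin.last N) = t := by simp [hu₀, hlast_ne]
  -- the infimum is attained on a chain in S
  have key : ∀ ω, ∃ u ∈ S, Snet N X τ t ω = P u ω := by
    intro ω
    have hsub : { y : ℝ | ∃ u : Fin (N + 1) → ℕ, Monotone u ∧ u 0 = τ ∧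
        u (Fin.last N) = t ∧ y = P u ω } ⊆ (fun u => P u ω) '' (S : Set _) := by
      rintro y ⟨u, h1, h2, h3, rfl⟩
      exact ⟨u, hmemS u h1 h2 h3, rfl⟩
    have hfin : { y : ℝ | ∃ u : Fin (N + 1) → ℕ, Monotone u ∧ u 0 = τ ∧
        u (Fin.last N) = t ∧ y = P u ω }.Finite :=
      (S.finite_toSet.image _).subset hsub
    have hne : { y : ℝ | ∃ u : Fin (N + 1) → ℕ, Monotone u ∧ u 0 = τ ∧
        u (Fin.last N) = t ∧ y = P u ω }.Nonempty :=
      ⟨P u₀ ω, u₀, hu₀mono, hu₀0, hu₀last, rfl⟩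
    have hmem := hne.csInf_mem hfin
    obtain ⟨u, h1, h2, h3, h4⟩ := hmem
    exact ⟨u, hmemS u h1 h2 h3, h4⟩
  -- pointwise domination by the sum over chains
  have hpt : ∀ ω, ENNReal.ofReal (Snet N X τ t ω ^ (s - 1)) ≤ ∑ u ∈ S, g (P u ω) := by
    intro ω
    obtain ⟨u, huS, hequ⟩ := key ω
    rw [hequ]
    exact Finset.single_le_sum (f := fun u => g (P u ω)) (fun _ _ => zero_le) huS
  -- the integral of each chain term equals v ^ d
  have chain_integral : ∀ u ∈ S, ∫⁻ ω, g (P u ω) ∂ℙ = v ^ d := by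
    intro u huS
    obtain ⟨-, h1, h2, h3⟩ := Finset.mem_filter.mp huS
    set emb : ∀ k : Fin N, ℕ ↪ Fin N × ℕ := fun k =>
      ⟨fun n => (k, n), fun a b hab => by simpa using hab⟩ with hemb
    set T : Finset (Fin N × ℕ) := Finset.univ.biUnion
      (fun k : Fin N => (Finset.Ico (u k.castSucc) (u k.succ)).map (emb k)) with hT
    have hdisj : ∀ k ∈ (Finset.univ : Finset (Fin N)), ∀ k' ∈ Finset.univ, k ≠ k' →
        Disjoint ((Finset.Ico (u k.castSucc) (u k.succ)).map (emb k))
          ((Finset.Ico (u k'.castSucc) (u k'.succ)).map (emb k')) := by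
      intro k _ k' _ hkk'
      rw [Finset.disjoint_left]
      rintro p hp hp'
      obtain ⟨a, _, rfl⟩ := Finset.mem_map.mp hp
      obtain ⟨b, _, hb⟩ := Finset.mem_map.mp hp'
      exact hkk' ((Prod.mk.injEq _ _ _ _).mp hb.symm).1
    have hprodT : ∀ f : Fin N × ℕ → ℝ≥0∞,
        ∏ p ∈ T, f p = ∏ k : Fin N, ∏ n ∈ Finset.Ico (u k.castSucc) (u k.succ), f (k, n) := by
      intro f
      rw [hT, Finset.prod_biUnion hdisj]
      exact Finset.prod_congr rfl fun k _ => Finset.prod_map _ _ _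
    have hcardT : T.card = d := by
      rw [hT, Finset.card_biUnion hdisj]
      simp only [Finset.card_map, Nat.card_Ico]
      rw [fin_sum_sub_telescope N u h1, h2, h3]
    have hptw : ∀ ω, g (P u ω) = ∏ p ∈ T, g (X p.1 p.2 ω) := by
      intro ω
      rw [hprodT]
      simp only [hg, hP]
      rw [← Real.finset_prod_rpow _ _
          (fun k _ => Finset.prod_nonneg fun n _ => (hpos k n ω).le) _,
        ENNReal.ofReal_prod_of_nonneg (fun k _ =>
          Real.rpow_nonneg (Finset.prod_nonneg fun n _ => (hpos k n ω).le) _)]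
      refine Finset.prod_congr rfl fun k _ => ?_
      rw [← Real.finset_prod_rpow _ _ (fun n _ => (hpos k n ω).le) _,
        ENNReal.ofReal_prod_of_nonneg (fun n _ => Real.rpow_nonneg (hpos k n ω).le _)]
    have hfam_meas : ∀ p : Fin N × ℕ, Measurable fun ω => g (X p.1 p.2 ω) :=
      fun p => hgmeas.comp (hmeas p.1 p.2)
    have hfam_indep : iIndepFun
        (fun p : Fin N × ℕ => fun ω => g (X p.1 p.2 ω)) ℙ :=
      hindep.comp (fun _ => g) (fun _ => hgmeas)
    calc ∫⁻ ω, g (P u ω) ∂ℙ = ∫⁻ ω, ∏ p ∈ T, g (X p.1 p.2 ω) ∂ℙ := by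
          simp_rw [hptw]
      _ = ∏ p ∈ T, ∫⁻ ω, g (X p.1 p.2 ω) ∂ℙ :=
          lintegral_finset_prod_of_iIndepFun _ hfam_meas hfam_indep T
      _ = ∏ _p ∈ T, v := by
          refine Finset.prod_congr rfl fun p _ => ?_
          exact ((hident p.1 p.2 ⟨0, hN⟩ 0).comp hgmeas).lintegral_eq
      _ = v ^ d := by rw [Finset.prod_const, hcardT]
  -- counting the chains
  have card_le : S.card ≤ (N - 1 + d).choose d := by
    set φ : (Fin (N + 1) → ℕ) → Multiset (Fin N) := fun u =>
      ∑ k : Fin N, (u k.succ - u k.castSucc) • ({k} : Multiset (Fin N)) with hφ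
    have hcount : ∀ u (k : Fin N), Multiset.count k (φ u) = u k.succ - u k.castSucc := by
      intro u k
      rw [hφ]
      simp only [Multiset.count_sum', Multiset.count_nsmul, Multiset.count_singleton]
      rw [Finset.sum_eq_single k (fun j _ hj => by simp [(Ne.symm hj : ¬k = j)])
        (fun h => absurd (Finset.mem_univ k) h)]
      simp
    have hcard : ∀ u ∈ S, (φ u).card = d := by
      intro u huS
      obtain ⟨-, h1, h2, h3⟩ := Finset.mem_filter.mp huS
      rw [← Multiset.sum_count_eq_card (s := Finset.univ) (fun a _ => Finset.mem_univ a)]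
      simp_rw [hcount]
      rw [fin_sum_sub_telescope N u h1, h2, h3]
    have hinj : Set.InjOn φ S := by
      intro u huS u' huS' hφeq
      obtain ⟨-, h1, h2, h3⟩ := Finset.mem_filter.mp huS
      obtain ⟨-, h1', h2', h3'⟩ := Finset.mem_filter.mp huS'
      have hgap : ∀ k : Fin N, u k.succ - u k.castSucc = u' k.succ - u' k.castSucc := by
        intro k
        rw [← hcount u k, ← hcount u' k, hφeq]
      funext j
      induction j using Fin.induction with
      | zero => rw [h2, h2']
      | succ i ihi =>
        have e1 : u i.castSucc + (u i.succ - u i.castSucc) = u i.succ :=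
          Nat.add_sub_cancel' (h1 Fin.castSucc_lt_succ.le)
        have e1' : u' i.castSucc + (u' i.succ - u' i.castSucc) = u' i.succ :=
          Nat.add_sub_cancel' (h1' Fin.castSucc_lt_succ.le)
        have h4 := hgap i
        omega
    have hmapsto : ∀ u ∈ S, φ u ∈ Finset.univ.image (Sym.toMultiset : Sym (Fin N) d → _) := by
      intro u huS
      exact Finset.mem_image.mpr ⟨⟨φ u, hcard u huS⟩, Finset.mem_univ _, rfl⟩
    have h1 : S.card ≤ (Finset.univ.image (Sym.toMultiset : Sym (Fin N) d → _)).card :=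
      Finset.card_le_card_of_injOn φ hmapsto hinj
    have h2 : (Finset.univ.image (Sym.toMultiset : Sym (Fin N) d → _)).card ≤
        Fintype.card (Sym (Fin N) d) := by
      simpa using Finset.card_image_le (s := (Finset.univ : Finset (Sym (Fin N) d)))
    have h3 : Fintype.card (Sym (Fin N) d) = (N - 1 + d).choose d := by
      rw [Sym.card_sym_eq_choose, Fintype.card_fin]
      congr 1
      omega
    omega
  -- assemble
  calc ∫⁻ ω, ENNReal.ofReal (Snet N X τ t ω ^ (s - 1)) ∂ℙ
      ≤ ∫⁻ ω, ∑ u ∈ S, g (P u ω) ∂ℙ := lintegral_mono hpt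
    _ = ∑ u ∈ S, ∫⁻ ω, g (P u ω) ∂ℙ :=
        lintegral_finset_sum _ (fun u _ => hgmeas.comp (hPmeas u))
    _ = ∑ _u ∈ S, v ^ d := Finset.sum_congr rfl chain_integral
    _ = (S.card : ℝ≥0∞) * v ^ d := by rw [Finset.sum_const, nsmul_eq_mul]
    _ ≤ ((N - 1 + d).choose d : ℝ≥0∞) * v ^ d :=
        mul_le_mul_left (by exact_mod_cast card_le) _
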